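/- Let f₀ > 0, v₀ > 0, q₀ > 0 and let λ, c, d₁ be real numbers. Define F(x) := (2f₀q₀/(3v₀²))·(x³ − d₁³) + (c·√(2q₀)/v₀)·(x² − d₁²) + ((c² − λ)/f₀)·(x − d₁) for x ∈ ℝ. Then F(d₁) = 0 and (v₀²/(8q₀))·(F″(x))² = λ + f₀·F′(x) for all x ∈ ℝ. -/

import Mathlib

theorem stmt_9 (f₀ v₀ q₀ lam c d₁ : ℝ)
    (hf₀ : 0 < f₀) (hv₀ : 0 < v₀) (hq₀ : 0 < q₀)
    (F : ℝ → ℝ)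
    (hF : ∀ x : ℝ,
      F x = (2 * f₀ * q₀ / (3 * v₀ ^ 2)) * (x ^ 3 - d₁ ^ 3)
        + (c * Real.sqrt (2 * q₀) / v₀) * (x ^ 2 - d₁ ^ 2)
        + ((c ^ 2 - lam) / f₀) * (x - d₁)) :
    F d₁ = 0 ∧
    ∀ x : ℝ, (v₀ ^ 2 / (8 * q₀)) * (deriv (deriv F) x) ^ 2 = lam + f₀ * deriv F x := by
  have hFe : F = fun x => (2 * f₀ * q₀ / (3 * v₀ ^ 2)) * (x ^ 3 - d₁ ^ 3)
        + (c * Real.sqrt (2 * q₀) / v₀) * (x ^ 2 - d₁ ^ 2)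
        + ((c ^ 2 - lam) / f₀) * (x - d₁) := funext hF
  subst hFe
  set a := 2 * f₀ * q₀ / (3 * v₀ ^ 2) with ha
  set b := c * Real.sqrt (2 * q₀) / v₀ with hb
  set e := (c ^ 2 - lam) / f₀ with he
  have h1 : ∀ x : ℝ, HasDerivAt (fun x : ℝ => a * (x ^ 3 - d₁ ^ 3)
      + b * (x ^ 2 - d₁ ^ 2) + e * (x - d₁))
      (a * (3 * x ^ 2) + b * (2 * x) + e * 1) x := by
    intro x
    have h3 : HasDerivAt (fun x : ℝ => x ^ 3 - d₁ ^ 3) ((3 : ℕ) * x ^ 2) x := by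
      simpa using (hasDerivAt_pow 3 x).sub_const (d₁ ^ 3)
    have h2 : HasDerivAt (fun x : ℝ => x ^ 2 - d₁ ^ 2) ((2 : ℕ) * x ^ 1) x := by
      simpa using (hasDerivAt_pow 2 x).sub_const (d₁ ^ 2)
    have h0 : HasDerivAt (fun x : ℝ => x - d₁) (1 : ℝ) x := by
      simpa using (hasDerivAt_id x).sub_const d₁
    have := ((h3.const_mul a).add (h2.const_mul b)).add (h0.const_mul e)
    refine this.congr_deriv ?_
    push_cast
    ring
  have hd1 : deriv (fun x : ℝ => a * (x ^ 3 - d₁ ^ 3)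
      + b * (x ^ 2 - d₁ ^ 2) + e * (x - d₁))
      = fun x : ℝ => a * (3 * x ^ 2) + b * (2 * x) + e * 1 :=
    funext fun x => (h1 x).deriv
  have h2 : ∀ x : ℝ, HasDerivAt (fun x : ℝ => a * (3 * x ^ 2) + b * (2 * x) + e * 1)
      (a * (3 * (2 * x)) + b * 2) x := by
    intro x
    have hx2 : HasDerivAt (fun x : ℝ => x ^ 2) ((2 : ℕ) * x ^ 1) x := hasDerivAt_pow 2 x
    have hxx : HasDerivAt (fun x : ℝ => x) (1 : ℝ) x := hasDerivAt_id x
    have := (((hx2.const_mul (3:ℝ)).const_mul a).add ((hxx.const_mul (2:ℝ)).const_mul b)).add_const (e * 1)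
    refine this.congr_deriv ?_
    push_cast
    ring
  constructor
  · simp
  · intro x
    rw [hd1]
    have hd2 : deriv (fun x : ℝ => a * (3 * x ^ 2) + b * (2 * x) + e * 1) x
        = a * (3 * (2 * x)) + b * 2 := (h2 x).deriv
    rw [hd2]
    have hs : Real.sqrt (2 * q₀) ^ 2 = 2 * q₀ := Real.sq_sqrt (by positivity)
    rw [ha, hb, he]
    set s := Real.sqrt (2 * q₀) with hsdef
    have hv : v₀ ≠ 0 := ne_of_gt hv₀
    have hq : q₀ ≠ 0 := ne_of_gt hq₀
    have hf : f₀ ≠ 0 := ne_of_gt hf₀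
    field_simp
    linear_combination (4 * v₀ ^ 2 * c ^ 2) * hs
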